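/- For f = T₀ + ε e^{-3R/λ} (T₀ ≠ 0) and the graph metric g in (-dT² + sinh²(T/λ)ğ_H), set H = sinh(T₀/λ), ḡ = H⁻²g, a = ḡ - ğ_H. Then in the ğ_H-orthonormal frame, a_ij = (2ε/λ)coth(T₀/λ) e^{-3R/λ} δ_ij + O(e^{-6R/λ}) as R → ∞. -/

import Mathlib

lemma exp_lin {x : ℝ} (hx : |x| ≤ 1) : |Real.exp x - (1 + x)| ≤ (3/4) * x ^ 2 := by
  have h := Real.exp_bound hx (n := 2) (by norm_num)
  simp [Finset.sum_range_succ] at h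
  calc |Real.exp x - (1 + x)| ≤ |x| ^ 2 * ((2:ℕ).succ / ((2:ℕ).factorial * 2)) := by
        convert h using 2 <;> norm_num
    _ = (3/4) * x ^ 2 := by rw [sq_abs]; norm_num; ring

set_option maxHeartbeats 1000000 in
theorem metric_asymptotics_of_hyperbolic_graph (lam T₀ ε : ℝ) (hlam : 0 < lam)
    (hT₀ : T₀ ≠ 0)
    (f : ℝ → ℝ) (hf : ∀ R, f R = T₀ + ε * Real.exp (-3 * R / lam))
    (g : Fin 3 → Fin 3 → ℝ → ℝ)
    (hg11 : ∀ R, g 0 0 R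
      = (Real.sinh (f R / lam))^2 - (9 * ε^2 / lam^2) * Real.exp (-6 * R / lam))
    (hg22 : ∀ R, g 1 1 R = (Real.sinh (f R / lam))^2)
    (hg33 : ∀ R, g 2 2 R = (Real.sinh (f R / lam))^2)
    (hgoff : ∀ (i j : Fin 3) R, i ≠ j → g i j R = 0)
    (a : Fin 3 → Fin 3 → ℝ → ℝ)
    (ha : ∀ i j R, a i j R
      = ((Real.sinh (T₀ / lam))^2)⁻¹ * g i j R - (if i = j then 1 else 0)) :
    ∃ C R₀ : ℝ, ∀ R, R₀ ≤ R → ∀ i j : Fin 3,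
      |a i j R - (2 * ε / lam) * (Real.cosh (T₀ / lam) / Real.sinh (T₀ / lam))
          * Real.exp (-3 * R / lam) * (if i = j then 1 else 0)|
        ≤ C * Real.exp (-6 * R / lam) := by
  set t := T₀ / lam with ht
  set s := Real.sinh t with hsdef
  set c := Real.cosh t with hcdef
  have hs : s ≠ 0 := by
    rw [hsdef, ne_eq, Real.sinh_eq_zero]
    exact div_ne_zero hT₀ (ne_of_gt hlam)
  have hs2 : 0 < s ^ 2 := by positivity
  have hlam' : (lam : ℝ) ≠ 0 := ne_of_gt hlam
  refine ⟨3 * ε^2 * (Real.exp t ^ 2 + Real.exp (-t) ^ 2) / (4 * lam^2 * s^2)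
      + 9 * ε^2 / (lam^2 * s^2),
    -(lam/3) * Real.log (lam / (2*|ε|+1)), ?_⟩
  intro R hR i j
  set E := Real.exp (-3 * R / lam) with hE
  have hEpos : 0 < E := Real.exp_pos _
  have hE2 : E ^ 2 = Real.exp (-6 * R / lam) := by
    rw [hE, sq, ← Real.exp_add]; congr 1; ring
  set u := ε * E / lam with hu
  -- smallness of u
  have h2u : |2 * u| ≤ 1 := by
    have hden : (0:ℝ) < 2 * |ε| + 1 := by positivity
    have hEle : E ≤ lam / (2*|ε|+1) := by
      rw [hE]
      have : -3 * R / lam ≤ Real.log (lam / (2*|ε|+1)) := by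
        have h' : -(lam/3) * Real.log (lam / (2*|ε|+1)) ≤ R := hR
        rw [div_le_iff₀ hlam] at *
        nlinarith [h']
      calc Real.exp (-3 * R / lam) ≤ Real.exp (Real.log (lam / (2*|ε|+1))) :=
            Real.exp_le_exp.mpr this
        _ = lam / (2*|ε|+1) := Real.exp_log (by positivity)
    have hE' : E * (2*|ε|+1) ≤ lam := by
      rw [← le_div_iff₀ hden]; exact hEle
    have hu1 : |u| ≤ |ε| / (2*|ε|+1) := by
      rw [hu, abs_div, abs_mul, abs_of_pos hlam, abs_of_pos hEpos,
        div_le_div_iff₀ hlam hden]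
      nlinarith [mul_le_mul_of_nonneg_left hE' (abs_nonneg ε)]
    rw [abs_mul, abs_two]
    have h9 : 2 * (|ε| / (2*|ε|+1)) ≤ 1 := by
      rw [mul_div_assoc', div_le_one hden]; linarith [abs_nonneg ε]
    nlinarith [hu1]
  -- remainder bounds
  set r₁ := Real.exp (2*u) - (1 + 2*u) with hr₁def
  set r₂ := Real.exp (-(2*u)) - (1 - 2*u) with hr₂def
  have hr₁ : |r₁| ≤ 3 * u ^ 2 := by
    have := exp_lin h2u
    calc |r₁| ≤ (3/4) * (2*u)^2 := this
      _ = 3 * u^2 := by ring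
  have hr₂ : |r₂| ≤ 3 * u ^ 2 := by
    have h' : |(-(2*u))| ≤ 1 := by rwa [abs_neg]
    have := exp_lin h'
    rw [hr₂def, show (1 - 2*u : ℝ) = 1 + -(2*u) by ring]
    calc |Real.exp (-(2*u)) - (1 + -(2*u))| ≤ (3/4) * (-(2*u))^2 := this
      _ = 3 * u^2 := by ring
  -- key algebraic identity
  have hfR : f R / lam = t + u := by
    rw [hf, add_div, ht, hu, hE, mul_div_assoc]
  have hexpu : Real.exp u * Real.exp (-u) = 1 := by
    rw [← Real.exp_add]; simp
  have key : Real.sinh (t + u) ^ 2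
      = s^2 + 2*u*s*c + (Real.exp t ^ 2 * r₁ + Real.exp (-t) ^ 2 * r₂) / 4 := by
    rw [hsdef, hcdef, hr₁def, hr₂def, Real.sinh_eq, Real.sinh_eq, Real.cosh_eq,
      show -(t+u) = -t + -u by ring, Real.exp_add, Real.exp_add,
      show (2:ℝ)*u = u + u by ring, show -(u+u) = -u + -u by ring,
      Real.exp_add, Real.exp_add]
    linear_combination (-(Real.exp t * Real.exp (-t)) / 2) * hexpu
  set Rem := (Real.exp t ^ 2 * r₁ + Real.exp (-t) ^ 2 * r₂) / 4 with hRem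
  have hRemB : |Rem| ≤ (Real.exp t ^ 2 + Real.exp (-t) ^ 2) * (3 * u^2) / 4 := by
    rw [hRem]
    have h1 := abs_le.mp hr₁
    have h2 := abs_le.mp hr₂
    rw [abs_le]
    constructor <;> nlinarith [sq_nonneg (Real.exp t), sq_nonneg (Real.exp (-t)),
      h1.1, h1.2, h2.1, h2.2]
  have hu2 : u ^ 2 = ε^2 * E^2 / lam^2 := by rw [hu, div_pow, mul_pow]
  -- the common diagonal bound
  have hC1 : (s^2)⁻¹ * |Rem|
      ≤ 3 * ε^2 * (Real.exp t ^ 2 + Real.exp (-t) ^ 2) / (4 * lam^2 * s^2) * E^2 := by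
    calc (s^2)⁻¹ * |Rem|
        ≤ (s^2)⁻¹ * ((Real.exp t ^ 2 + Real.exp (-t) ^ 2) * (3 * u^2) / 4) :=
          mul_le_mul_of_nonneg_left hRemB (inv_nonneg.mpr hs2.le)
      _ = 3 * ε^2 * (Real.exp t ^ 2 + Real.exp (-t) ^ 2) / (4 * lam^2 * s^2) * E^2 := by
          rw [hu2]; field_simp
  have hCnn : (0:ℝ) ≤ 9 * ε^2 / (lam^2 * s^2) * E^2 := by positivity
  -- diagonal deviation for 11 and 22 entries
  have hdiag : ∀ i : Fin 3, g i i R = Real.sinh (f R / lam) ^ 2 →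
      |a i i R - (2 * ε / lam) * (c / s) * E * (if i = i then 1 else 0)|
        ≤ (3 * ε^2 * (Real.exp t ^ 2 + Real.exp (-t) ^ 2) / (4 * lam^2 * s^2)
            + 9 * ε^2 / (lam^2 * s^2)) * E^2 := by
    intro i hgi
    have heq : a i i R - (2 * ε / lam) * (c / s) * E * (if i = i then 1 else 0)
        = (s^2)⁻¹ * Rem := by
      rw [ha, hgi, hfR, key, if_pos rfl, hu]
      field_simp
      ring
    rw [heq, abs_mul, abs_of_pos (inv_pos.mpr hs2)]
    calc (s^2)⁻¹ * |Rem|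
        ≤ 3 * ε^2 * (Real.exp t ^ 2 + Real.exp (-t) ^ 2) / (4 * lam^2 * s^2) * E^2 := hC1
      _ ≤ _ := by nlinarith [hCnn]
  have hoff : ∀ i j : Fin 3, i ≠ j →
      |a i j R - (2 * ε / lam) * (c / s) * E * (if i = j then 1 else 0)|
        ≤ (3 * ε^2 * (Real.exp t ^ 2 + Real.exp (-t) ^ 2) / (4 * lam^2 * s^2)
            + 9 * ε^2 / (lam^2 * s^2)) * E^2 := by
    intro i j hij
    rw [ha, hgoff i j R hij]
    simp only [if_neg hij, mul_zero, sub_zero]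
    rw [abs_zero]
    positivity
  have h00 : |a 0 0 R - (2 * ε / lam) * (c / s) * E * (if (0:Fin 3) = 0 then 1 else 0)|
        ≤ (3 * ε^2 * (Real.exp t ^ 2 + Real.exp (-t) ^ 2) / (4 * lam^2 * s^2)
            + 9 * ε^2 / (lam^2 * s^2)) * E^2 := by
    have heq : a 0 0 R - (2 * ε / lam) * (c / s) * E * (if (0:Fin 3) = 0 then 1 else 0)
        = (s^2)⁻¹ * Rem - (s^2)⁻¹ * (9 * ε^2 / lam^2 * E^2) := by
      rw [ha, hg11, hfR, key, if_pos rfl, hu, ← hE2]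
      field_simp
      ring
    rw [heq]
    calc |(s^2)⁻¹ * Rem - (s^2)⁻¹ * (9 * ε^2 / lam^2 * E^2)|
        ≤ (s^2)⁻¹ * |Rem| + (s^2)⁻¹ * (9 * ε^2 / lam^2 * E^2) := by
          have h1 : |(s^2)⁻¹ * Rem| = (s^2)⁻¹ * |Rem| := by
            rw [abs_mul, abs_of_pos (inv_pos.mpr hs2)]
          have h2 : (0:ℝ) ≤ (s^2)⁻¹ * (9 * ε^2 / lam^2 * E^2) := by positivity
          calc |(s^2)⁻¹ * Rem - (s^2)⁻¹ * (9 * ε^2 / lam^2 * E^2)|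
              ≤ |(s^2)⁻¹ * Rem| + |(s^2)⁻¹ * (9 * ε^2 / lam^2 * E^2)| := abs_sub _ _
            _ = (s^2)⁻¹ * |Rem| + (s^2)⁻¹ * (9 * ε^2 / lam^2 * E^2) := by
                rw [h1, abs_of_nonneg h2]
      _ ≤ 3 * ε^2 * (Real.exp t ^ 2 + Real.exp (-t) ^ 2) / (4 * lam^2 * s^2) * E^2
            + 9 * ε^2 / (lam^2 * s^2) * E^2 := by
          have h3 : (s^2)⁻¹ * (9 * ε^2 / lam^2 * E^2) = 9 * ε^2 / (lam^2 * s^2) * E^2 := by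
            field_simp
            try ring
            try exact Or.inl trivial
          rw [h3]; exact add_le_add hC1 le_rfl
      _ = _ := by ring
  rw [← hE2]
  fin_cases i <;> fin_cases j
  · exact h00
  · exact hoff 0 1 (by decide)
  · exact hoff 0 2 (by decide)
  · exact hoff 1 0 (by decide)
  · exact hdiag 1 (hg22 R)
  · exact hoff 1 2 (by decide)
  · exact hoff 2 0 (by decide)
  · exact hoff 2 1 (by decide)
  · exact hdiag 2 (hg33 R)
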